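/- In an IFG power set algebra, if X and Y are rooted elements (meaning ∅ ∈ X⁺ ∩ X⁻ and ∅ ∈ Y⁺ ∩ Y⁻), then the absorption laws hold for the N-indexed operations: X +_N (X ·_J Y) = X and X ·_N (X +_J Y) = X, for any J ⊆ N. -/

import Mathlib

/-- Two valuations agree outside `J`: they take the same values on all coordinates not in `J`. -/
def AgreeOutside {ι A : Type*} (J : Set ι) (a b : ι → A) : Prop :=
  ∀ i, i ∉ J → a i = b i

/-- `𝒰` is a `J`-saturated disjoint cover of `V`. -/
def IsSatDisjCover {ι A : Type*} (J : Set ι) (V : Set (ι → A))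
    (𝒰 : Set (Set (ι → A))) : Prop :=
  ⋃₀ 𝒰 = V ∧ 𝒰.Pairwise Disjoint ∧
    ∀ a ∈ V, ∀ b ∈ V, AgreeOutside J a b → ∀ U ∈ 𝒰, a ∈ U → b ∈ U

/-- `V = V₁ ∪_J V₂`: a `J`-saturated disjoint (binary) cover of `V`. -/
def UnionJ {ι A : Type*} (J : Set ι) (V V₁ V₂ : Set (ι → A)) : Prop :=
  V₁ ∪ V₂ = V ∧ Disjoint V₁ V₂ ∧
    ∀ a ∈ V, ∀ b ∈ V, AgreeOutside J a b →
      ((a ∈ V₁ → b ∈ V₁) ∧ (a ∈ V₂ → b ∈ V₂))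

/-- `f : V → A` is independent of `J`. -/
def IndepOf {ι A : Type*} (J : Set ι) (V : Set (ι → A)) (f : (ι → A) → A) : Prop :=
  ∀ a ∈ V, ∀ b ∈ V, AgreeOutside J a b → f a = f b

/-- `V(n:f) = { ⃗a(n : f ⃗a) : ⃗a ∈ V }`. -/
def teamUpd {ι A : Type*} [DecidableEq ι] (n : ι) (f : (ι → A) → A)
    (V : Set (ι → A)) : Set (ι → A) :=
  (fun a => Function.update a n (f a)) '' V

/-- `V(n:A) = { ⃗a(n : c) : ⃗a ∈ V, c ∈ A }`. -/
def teamExp {ι A : Type*} [DecidableEq ι] (n : ι) (V : Set (ι → A)) : Set (ι → A) :=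
  {x | ∃ a ∈ V, ∃ c : A, x = Function.update a n c}

/-- An element of an IFG cylindric power set algebra: a pair `⟨X⁺, X⁻⟩` of sets of teams. -/
abbrev IFGElem (ι A : Type*) := Set (Set (ι → A)) × Set (Set (ι → A))

/-- Negation: `∼⟨X⁺, X⁻⟩ = ⟨X⁻, X⁺⟩`. -/
def ifgNeg {ι A : Type*} (X : IFGElem ι A) : IFGElem ι A := (X.2, X.1)

/-- `{V : V = V₁ ∪_J V₂ for some V₁ ∈ S, V₂ ∈ T}`. -/
def plusPos {ι A : Type*} (J : Set ι) (S T : Set (Set (ι → A))) : Set (Set (ι → A)) :=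
  {V | ∃ V₁ ∈ S, ∃ V₂ ∈ T, UnionJ J V V₁ V₂}

/-- The operation `X +_J Y`. -/
def ifgPlus {ι A : Type*} (J : Set ι) (X Y : IFGElem ι A) : IFGElem ι A :=
  (plusPos J X.1 Y.1, X.2 ∩ Y.2)

/-- The operation `X ·_J Y`. -/
def ifgTimes {ι A : Type*} (J : Set ι) (X Y : IFGElem ι A) : IFGElem ι A :=
  (X.1 ∩ Y.1, plusPos J X.2 Y.2)

/-- The cylindrification `C_{n,J}(X)`. -/
def ifgCyl {ι A : Type*} [DecidableEq ι] (n : ι) (J : Set ι) (X : IFGElem ι A) :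
    IFGElem ι A :=
  ({V | ∃ f, IndepOf J V f ∧ teamUpd n f V ∈ X.1}, {W | teamExp n W ∈ X.2})

/-- The constant `0`. -/
def ifgZero {ι A : Type*} : IFGElem ι A := ({∅}, Set.univ)

/-- The constant `1`. -/
def ifgOne {ι A : Type*} : IFGElem ι A := (Set.univ, {∅})

/-- The diagonal element `D_{ij}`. -/
def ifgD {ι A : Type*} (i j : ι) : IFGElem ι A :=
  ({V | ∀ a ∈ V, a i = a j}, {V | ∀ a ∈ V, a i ≠ a j})

/-- An element is rooted if both coordinates contain the empty team. -/
def IsRooted {ι A : Type*} (X : IFGElem ι A) : Prop := ∅ ∈ X.1 ∧ ∅ ∈ X.2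

/-- Absorption for the `N`-indexed operations on rooted elements:
`X +_N (X ·_J Y) = X` and `X ·_N (X +_J Y) = X`, where `N` is the full index set. -/

lemma unionJ_self_empty {ι A : Type*} (J : Set ι) (V : Set (ι → A)) :
    UnionJ J V V ∅ := by
  refine ⟨Set.union_empty V, Set.disjoint_empty V, ?_⟩
  intro a ha b hb _
  exact ⟨fun _ => hb, fun h => h.elim⟩

lemma mem_plusPos_left {ι A : Type*} (J : Set ι) {S T : Set (Set (ι → A))}
    {V : Set (ι → A)} (hV : V ∈ S) (hT : ∅ ∈ T) : V ∈ plusPos J S T :=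
  ⟨V, hV, ∅, hT, unionJ_self_empty J V⟩

lemma plusPos_univ_subset {ι A : Type*} (S T : Set (Set (ι → A))) :
    plusPos (Set.univ : Set ι) S T ⊆ S ∪ T := by
  rintro V ⟨V₁, hV₁, V₂, hV₂, hu, hd, hsat⟩
  rcases Set.eq_empty_or_nonempty V₂ with h2 | ⟨a, ha⟩
  · left
    have : V₁ = V := by rw [← hu, h2, Set.union_empty]
    rwa [this] at hV₁
  · right
    have haV : a ∈ V := hu ▸ Or.inr ha
    have hVsub : V ⊆ V₂ := fun b hb =>
      (hsat a haV b hb (fun i hi => absurd (Set.mem_univ i) hi)).2 ha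
    have hV1e : V₁ = ∅ := by
      rw [Set.eq_empty_iff_forall_notMem]
      intro x hx
      exact hd.ne_of_mem hx (hVsub (hu ▸ Or.inl hx)) rfl
    have : V₂ = V := by rw [← hu, hV1e, Set.empty_union]
    rwa [this] at hV₂

theorem absorption_rooted {ι A : Type*} (J : Set ι) (X Y : IFGElem ι A)
    (hX : IsRooted X) (hY : IsRooted Y) :
    ifgPlus (Set.univ : Set ι) X (ifgTimes J X Y) = X ∧
    ifgTimes (Set.univ : Set ι) X (ifgPlus J X Y) = X := by
  obtain ⟨hX1, hX2⟩ := hX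
  obtain ⟨hY1, hY2⟩ := hY
  constructor
  · refine Prod.ext ?_ ?_
    · apply Set.Subset.antisymm
      · intro V hV
        rcases plusPos_univ_subset _ _ hV with h | h
        · exact h
        · exact h.1
      · intro V hV
        exact mem_plusPos_left _ hV ⟨hX1, hY1⟩
    · show X.2 ∩ plusPos J X.2 Y.2 = X.2
      apply Set.inter_eq_left.mpr
      intro W hW
      exact mem_plusPos_left _ hW hY2
  · refine Prod.ext ?_ ?_
    · show X.1 ∩ plusPos J X.1 Y.1 = X.1
      apply Set.inter_eq_left.mpr
      intro W hW
      exact mem_plusPos_left _ hW hY1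
    · apply Set.Subset.antisymm
      · intro V hV
        rcases plusPos_univ_subset _ _ hV with h | h
        · exact h
        · exact h.1
      · intro V hV
        exact mem_plusPos_left _ hV ⟨hX2, hY2⟩
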